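/- Let (Ω,M) be a finite transformation monoid and μ a probability distribution on M such that the submonoid N generated by the support of μ is transitive on Ω. Let P(α,β) = Σ_{m : αm = β} μ(m) and let π be a stationary distribution for P. Suppose B and S are subsets of Ω such that |S ∩ Bm⁻¹| = 1 for all m ∈ N, where Bm⁻¹ = {α ∈ Ω : αm ∈ B}. Then |S| · π(B) = 1, where π(B) = Σ_{ω∈B} π(ω). -/

import Mathlib

open Finset

section Aux

variable {Ω : Type*} [Fintype Ω] [DecidableEq Ω]

/-- The Markov operator associated to `μ`. -/
noncomputable def Pop (μ : (Ω → Ω) → ℝ) : (Ω → ℝ) →ₗ[ℝ] (Ω → ℝ) where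
  toFun f := fun α => ∑ m : Ω → Ω, μ m * f (m α)
  map_add' f g := by
    funext α
    simp [mul_add, Finset.sum_add_distrib]
  map_smul' c f := by
    funext α
    simp only [Pi.smul_apply, smul_eq_mul, RingHom.id_apply, Finset.mul_sum]
    exact Finset.sum_congr rfl fun m _ => by ring

lemma Pop_apply (μ : (Ω → Ω) → ℝ) (f : Ω → ℝ) (α : Ω) :
    Pop μ f α = ∑ m : Ω → Ω, μ m * f (m α) := rfl

/-- Iterates of the Markov operator. -/
noncomputable def iterP (μ : (Ω → Ω) → ℝ) (f : Ω → ℝ) : ℕ → Ω → ℝ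
  | 0 => f
  | n + 1 => Pop μ (iterP μ f n)

lemma iterP_pop (μ : (Ω → Ω) → ℝ) (f : Ω → ℝ) (n : ℕ) :
    iterP μ (Pop μ f) n = Pop μ (iterP μ f n) := by
  induction n with
  | zero => rfl
  | succ n ih => show Pop μ (iterP μ (Pop μ f) n) = _; rw [ih]; rfl

lemma iterP_sub (μ : (Ω → Ω) → ℝ) (f g : Ω → ℝ) (n : ℕ) :
    iterP μ (f - g) n = iterP μ f n - iterP μ g n := by
  induction n with
  | zero => rfl
  | succ n ih => show Pop μ (iterP μ (f - g) n) = _; rw [ih, map_sub]; rfl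

lemma iterP_const (μ : (Ω → Ω) → ℝ) (hμ1 : ∑ m : Ω → Ω, μ m = 1) (c : ℝ) (n : ℕ) :
    iterP μ (fun _ => c) n = fun _ => c := by
  induction n with
  | zero => rfl
  | succ n ih =>
    show Pop μ (iterP μ (fun _ => c) n) = _
    rw [ih]
    funext α
    rw [Pop_apply, ← Finset.sum_mul, hμ1, one_mul]

lemma iterP_bound (μ : (Ω → Ω) → ℝ) (hμ0 : ∀ m : Ω → Ω, 0 ≤ μ m)
    (hμ1 : ∑ m : Ω → Ω, μ m = 1) (f : Ω → ℝ) (M : ℝ) (hM : ∀ α, |f α| ≤ M) :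
    ∀ n α, |iterP μ f n α| ≤ M := by
  intro n
  induction n with
  | zero => exact hM
  | succ n ih =>
    intro α
    show |∑ m : Ω → Ω, μ m * iterP μ f n (m α)| ≤ M
    calc |∑ m : Ω → Ω, μ m * iterP μ f n (m α)|
        ≤ ∑ m : Ω → Ω, |μ m * iterP μ f n (m α)| := Finset.abs_sum_le_sum_abs _ _
      _ ≤ ∑ m : Ω → Ω, μ m * M := by
          refine Finset.sum_le_sum fun m _ => ?_
          rw [abs_mul, abs_of_nonneg (hμ0 m)]
          exact mul_le_mul_of_nonneg_left (ih (m α)) (hμ0 m)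
      _ = M := by rw [← Finset.sum_mul, hμ1, one_mul]

lemma sum_indicator_iter (μ : (Ω → Ω) → ℝ) (hμ1 : ∑ m : Ω → Ω, μ m = 1)
    (B S₀ : Finset Ω)
    (hBS : ∀ m ∈ Submonoid.closure {m : Function.End Ω | μ m ≠ 0},
      (@Finset.filter Ω (fun α : Ω => m α ∈ B) (fun _ => by infer_instance) S₀).card = 1) :
    ∀ n : ℕ, ∀ w ∈ Submonoid.closure {m : Function.End Ω | μ m ≠ 0},
      ∑ α ∈ S₀, iterP μ (fun ω => if ω ∈ B then (1 : ℝ) else 0) n (w α) = 1 := by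
  intro n
  induction n with
  | zero =>
    intro w hw
    show ∑ α ∈ S₀, (if w α ∈ B then (1 : ℝ) else 0) = 1
    rw [Finset.sum_boole, hBS w hw]
    norm_num
  | succ n ih =>
    intro w hw
    show ∑ α ∈ S₀, ∑ m : Ω → Ω,
      μ m * iterP μ (fun ω => if ω ∈ B then (1 : ℝ) else 0) n (m (w α)) = 1
    rw [Finset.sum_comm]
    have : ∀ m : Ω → Ω, (∑ α ∈ S₀,
        μ m * iterP μ (fun ω => if ω ∈ B then (1 : ℝ) else 0) n (m (w α))) = μ m := by
      intro m
      by_cases hm : μ m = 0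
      · simp [hm]
      · rw [← Finset.mul_sum]
        let m' : Function.End Ω := m
        have hm' : m' ∈ {m : Function.End Ω | μ m ≠ 0} := hm
        have hmw : m' * w ∈
            Submonoid.closure {m : Function.End Ω | μ m ≠ 0} :=
          mul_mem (Submonoid.subset_closure hm') hw
        have := ih (m' * w) hmw
        have heq : (∑ α ∈ S₀,
            iterP μ (fun ω => if ω ∈ B then (1 : ℝ) else 0) n (m (w α))) = 1 := this
        rw [heq, mul_one]
    rw [Finset.sum_congr rfl fun m _ => this m, hμ1]

lemma harmonic_eq (μ : (Ω → Ω) → ℝ) (hμ0 : ∀ m : Ω → Ω, 0 ≤ μ m)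
    (hμ1 : ∑ m : Ω → Ω, μ m = 1)
    (htrans : ∀ α β : Ω,
      ∃ m ∈ Submonoid.closure {m : Function.End Ω | μ m ≠ 0}, m α = β)
    (f : Ω → ℝ) (hf : ∀ α, f α = ∑ m : Ω → Ω, μ m * f (m α)) (α β : Ω) :
    f α = f β := by
  obtain ⟨α₀, -, hmin⟩ := Finset.exists_min_image Finset.univ f ⟨α, Finset.mem_univ α⟩
  have hminle : ∀ γ : Ω, f α₀ ≤ f γ := fun γ => hmin γ (Finset.mem_univ γ)
  set c := f α₀ with hc
  have step : ∀ γ : Ω, f γ = c → ∀ m : Ω → Ω, μ m ≠ 0 → f (m γ) = c := by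
    intro γ hγ m hm
    have h0 : ∑ m : Ω → Ω, μ m * (f (m γ) - c) = 0 := by
      have h1 : ∑ m : Ω → Ω, μ m * (f (m γ) - c)
          = (∑ m : Ω → Ω, μ m * f (m γ)) - (∑ m : Ω → Ω, μ m) * c := by
        rw [Finset.sum_mul, ← Finset.sum_sub_distrib]
        exact Finset.sum_congr rfl fun m _ => by ring
      rw [h1, hμ1, ← hf γ, hγ]; ring
    have hnn : ∀ m ∈ Finset.univ (α := Ω → Ω), 0 ≤ μ m * (f (m γ) - c) := fun m _ =>
      mul_nonneg (hμ0 m) (sub_nonneg.2 (hminle (m γ)))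
    have := (Finset.sum_eq_zero_iff_of_nonneg hnn).1 h0 m (Finset.mem_univ m)
    rcases mul_eq_zero.1 this with h | h
    · exact absurd h hm
    · linarith [sub_eq_zero.1 h]
  have key : ∀ w ∈ Submonoid.closure {m : Function.End Ω | μ m ≠ 0},
      ∀ γ : Ω, f γ = c → f (w γ) = c := by
    intro w hw
    induction hw using Submonoid.closure_induction with
    | mem m hm => exact fun γ hγ => step γ hγ m hm
    | one => exact fun γ hγ => hγ
    | mul x y hx hy ihx ihy => exact fun γ hγ => ihx _ (ihy γ hγ)
  have hall : ∀ γ : Ω, f γ = c := by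
    intro γ
    obtain ⟨w, hw, hwγ⟩ := htrans α₀ γ
    rw [← hwγ]
    exact key w hw α₀ rfl
  rw [hall α, hall β]

/-- The linear functional `f ↦ ∑ ω, π ω * f ω`. -/
noncomputable def piF (π : Ω → ℝ) : (Ω → ℝ) →ₗ[ℝ] ℝ where
  toFun f := ∑ ω : Ω, π ω * f ω
  map_add' f g := by simp [mul_add, Finset.sum_add_distrib]
  map_smul' c f := by
    simp only [Pi.smul_apply, smul_eq_mul, RingHom.id_apply, Finset.mul_sum]
    exact Finset.sum_congr rfl fun ω _ => by ring

lemma piF_apply (π : Ω → ℝ) (f : Ω → ℝ) : piF π f = ∑ ω : Ω, π ω * f ω := rfl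

lemma piF_pop (μ : (Ω → Ω) → ℝ) (π : Ω → ℝ)
    (hstat : ∀ β : Ω,
      ∑ α : Ω, π α * (∑ m : Ω → Ω, if m α = β then μ m else 0) = π β)
    (f : Ω → ℝ) : piF π (Pop μ f) = piF π f := by
  have : piF π f = ∑ β : Ω,
      (∑ α : Ω, π α * (∑ m : Ω → Ω, if m α = β then μ m else 0)) * f β := by
    rw [piF_apply]
    exact Finset.sum_congr rfl fun β _ => by rw [hstat β]
  rw [this]
  symm
  calc ∑ β : Ω, (∑ α : Ω, π α * (∑ m : Ω → Ω, if m α = β then μ m else 0)) * f β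
      = ∑ β : Ω, ∑ α : Ω, ∑ m : Ω → Ω,
          (if m α = β then π α * (μ m * f β) else 0) := by
        refine Finset.sum_congr rfl fun β _ => ?_
        rw [Finset.sum_mul]
        refine Finset.sum_congr rfl fun α _ => ?_
        rw [Finset.mul_sum, Finset.sum_mul]
        refine Finset.sum_congr rfl fun m _ => ?_
        by_cases h : m α = β <;> simp [h] <;> ring
    _ = ∑ α : Ω, ∑ m : Ω → Ω, ∑ β : Ω,
          (if m α = β then π α * (μ m * f β) else 0) := by
        rw [Finset.sum_comm]
        exact Finset.sum_congr rfl fun α _ => Finset.sum_comm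
    _ = ∑ α : Ω, ∑ m : Ω → Ω, π α * (μ m * f (m α)) := by
        refine Finset.sum_congr rfl fun α _ => Finset.sum_congr rfl fun m _ => ?_
        rw [Finset.sum_ite_eq]
        simp
    _ = piF π (Pop μ f) := by
        rw [piF_apply]
        exact Finset.sum_congr rfl fun α _ => by
          rw [Pop_apply, Finset.mul_sum]

end Aux

/-- In the setting of the ergodic theorem: `(Ω, M)` a finite
transformation monoid, `μ` a probability distribution on `M` whose support generates a
submonoid `N` transitive on `Ω`, and `π` a stationary distribution for
`P(α, β) = ∑_{m : αm = β} μ m`.  If `B, S₀ ⊆ Ω` satisfy `|S₀ ∩ Bm⁻¹| = 1` for all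
`m ∈ N`, then `|S₀| ⋅ π(B) = 1`. -/
theorem generalized_neumann_lemma {Ω : Type*} [Fintype Ω] [DecidableEq Ω]
    (S : Set (Ω → Ω)) (hid : id ∈ S) (hcomp : ∀ m ∈ S, ∀ n ∈ S, n ∘ m ∈ S)
    (μ : (Ω → Ω) → ℝ) (hμ0 : ∀ m : Ω → Ω, 0 ≤ μ m) (hμ1 : ∑ m : Ω → Ω, μ m = 1)
    (hsupp : ∀ m : Ω → Ω, μ m ≠ 0 → m ∈ S)
    (htrans : ∀ α β : Ω,
      ∃ m ∈ Submonoid.closure {m : Function.End Ω | μ m ≠ 0}, m α = β)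
    (π : Ω → ℝ) (hπ0 : ∀ ω : Ω, 0 ≤ π ω) (hπ1 : ∑ ω : Ω, π ω = 1)
    (hstat : ∀ β : Ω,
      ∑ α : Ω, π α * (∑ m : Ω → Ω, if m α = β then μ m else 0) = π β)
    (B S₀ : Finset Ω)
    (hBS : ∀ m ∈ Submonoid.closure {m : Function.End Ω | μ m ≠ 0},
      (@Finset.filter Ω (fun α : Ω => m α ∈ B) (fun _ => by infer_instance) S₀).card = 1) :
    (S₀.card : ℝ) * ∑ ω ∈ B, π ω = 1 := by
  classical
  rcases isEmpty_or_nonempty Ω with hΩ | hΩ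
  · rw [Finset.univ_eq_empty, Finset.sum_empty] at hπ1
    norm_num at hπ1
  -- notation
  set b : ℝ := ∑ ω ∈ B, π ω with hb
  set ind : Ω → ℝ := fun ω => if ω ∈ B then (1 : ℝ) else 0 with hind
  set v₀ : Ω → ℝ := ind - (fun _ => b) with hv₀def
  set T : (Ω → ℝ) →ₗ[ℝ] (Ω → ℝ) := LinearMap.id - Pop μ with hT
  have hTapp : ∀ f : Ω → ℝ, T f = f - Pop μ f := fun f => rfl
  -- kernel of T is the constants
  have hker : LinearMap.ker T = Submodule.span ℝ {(fun _ => (1 : ℝ) : Ω → ℝ)} := by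
    apply le_antisymm
    · intro f hf
      have hf0 : f - Pop μ f = 0 := LinearMap.mem_ker.1 hf
      have hfharm : ∀ α, f α = ∑ m : Ω → Ω, μ m * f (m α) := by
        intro α
        have := congrFun hf0 α
        have h2 : f α - Pop μ f α = 0 := this
        rw [Pop_apply] at h2
        linarith
      have hconst : ∀ γ : Ω, f γ = f (Classical.arbitrary Ω) := fun γ =>
        harmonic_eq μ hμ0 hμ1 htrans f hfharm γ (Classical.arbitrary Ω)
      refine Submodule.mem_span_singleton.2 ⟨f (Classical.arbitrary Ω), ?_⟩
      funext γ
      simp [hconst γ]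
    · rw [Submodule.span_singleton_le_iff_mem]
      apply LinearMap.mem_ker.2
      rw [hTapp]
      funext α
      have : Pop μ (fun _ => (1 : ℝ)) α = 1 := by
        rw [Pop_apply]
        simp [hμ1]
      simp [this]
  have hone_ne : (fun _ => (1 : ℝ) : Ω → ℝ) ≠ 0 := by
    intro h
    have := congrFun h (Classical.arbitrary Ω)
    norm_num at this
  have hkerrank : Module.finrank ℝ (LinearMap.ker T) = 1 := by
    rw [hker]
    exact finrank_span_singleton hone_ne
  -- piF is surjective
  have hpiFsurj : Function.Surjective (piF π) := by
    intro r
    refine ⟨fun _ => r, ?_⟩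
    rw [piF_apply, ← Finset.sum_mul, hπ1, one_mul]
  have hpiFrange : LinearMap.range (piF π) = ⊤ := LinearMap.range_eq_top.2 hpiFsurj
  -- range T ≤ ker piF
  have hrange_le : LinearMap.range T ≤ LinearMap.ker (piF π) := by
    rintro _ ⟨f, rfl⟩
    apply LinearMap.mem_ker.2
    rw [hTapp, map_sub, piF_pop μ π hstat f, sub_self]
  -- dimension count
  have hdim : Module.finrank ℝ (Ω → ℝ) = Fintype.card Ω := Module.finrank_pi ℝ
  have h1 : Module.finrank ℝ (LinearMap.range T) + 1 = Fintype.card Ω := by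
    have := LinearMap.finrank_range_add_finrank_ker T
    rw [hkerrank, hdim] at this
    exact this
  have h2 : Module.finrank ℝ (LinearMap.ker (piF π)) + 1 = Fintype.card Ω := by
    have := LinearMap.finrank_range_add_finrank_ker (piF π)
    rw [hpiFrange, hdim] at this
    rw [finrank_top] at this
    rw [Module.finrank_self] at this
    omega
  have hrange_eq : LinearMap.range T = LinearMap.ker (piF π) :=
    Submodule.eq_of_le_of_finrank_le hrange_le (by omega)
  -- v₀ ∈ ker piF
  have hindB : piF π ind = b := by
    rw [piF_apply, hb]
    rw [Finset.sum_congr rfl (fun ω _ => by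
      rw [hind]
      exact (mul_ite _ (π ω) 1 0).trans (by simp) : ∀ ω ∈ Finset.univ,
        π ω * ind ω = if ω ∈ B then π ω else 0)]
    rw [Finset.sum_ite_mem, Finset.univ_inter]
  have hv₀mem : v₀ ∈ LinearMap.ker (piF π) := by
    apply LinearMap.mem_ker.2
    rw [hv₀def, map_sub, hindB]
    have : piF π (fun _ => b) = b := by
      rw [piF_apply, ← Finset.sum_mul, hπ1, one_mul]
    rw [this, sub_self]
  obtain ⟨x, hx⟩ : ∃ x : Ω → ℝ, T x = v₀ := by
    rw [← hrange_eq] at hv₀mem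
    exact hv₀mem
  have hxv : x - Pop μ x = v₀ := by rw [← hTapp]; exact hx
  -- the invariant sums
  have hone : (1 : Function.End Ω) ∈ Submonoid.closure {m : Function.End Ω | μ m ≠ 0} :=
    one_mem _
  have hkey : ∀ n : ℕ, ∑ α ∈ S₀, iterP μ ind n α = 1 := by
    intro n
    have := sum_indicator_iter μ hμ1 B S₀ hBS n 1 hone
    exact this
  have hitv₀ : ∀ n : ℕ, ∑ α ∈ S₀, iterP μ v₀ n α = 1 - (S₀.card : ℝ) * b := by
    intro n
    rw [hv₀def, iterP_sub, iterP_const μ hμ1 b n]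
    have : ∀ α ∈ S₀, ((iterP μ ind n - fun _ => b : Ω → ℝ)) α = iterP μ ind n α - b :=
      fun α _ => rfl
    rw [Finset.sum_congr rfl this, Finset.sum_sub_distrib, hkey n, Finset.sum_const]
    simp [nsmul_eq_mul]
  -- telescoping
  have htele : ∀ n : ℕ, (∑ α ∈ S₀, iterP μ x n α) - (∑ α ∈ S₀, iterP μ x (n + 1) α)
      = 1 - (S₀.card : ℝ) * b := by
    intro n
    have hdiff : iterP μ x n - iterP μ x (n + 1) = iterP μ v₀ n := by
      have : iterP μ x (n + 1) = iterP μ (Pop μ x) n := by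
        rw [iterP_pop]; rfl
      rw [this, ← iterP_sub, hxv]
    rw [← Finset.sum_sub_distrib]
    have : ∀ α ∈ S₀, iterP μ x n α - iterP μ x (n + 1) α = iterP μ v₀ n α := by
      intro α _
      exact congrFun hdiff α
    rw [Finset.sum_congr rfl this, hitv₀ n]
  set δ : ℝ := 1 - (S₀.card : ℝ) * b with hδ
  have hlin : ∀ n : ℕ, (∑ α ∈ S₀, iterP μ x 0 α) - (∑ α ∈ S₀, iterP μ x n α)
      = (n : ℝ) * δ := by
    intro n
    induction n with
    | zero => simp
    | succ n ih =>
      have := htele n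
      push_cast
      linarith
  -- boundedness
  set M : ℝ := ∑ ω : Ω, |x ω| with hM
  have hMx : ∀ α, |x α| ≤ M := fun α =>
    Finset.single_le_sum (fun ω _ => abs_nonneg (x ω)) (Finset.mem_univ α)
  have hMnn : 0 ≤ M := Finset.sum_nonneg fun ω _ => abs_nonneg (x ω)
  have hbd : ∀ n : ℕ, |∑ α ∈ S₀, iterP μ x n α| ≤ (S₀.card : ℝ) * M := by
    intro n
    calc |∑ α ∈ S₀, iterP μ x n α| ≤ ∑ α ∈ S₀, |iterP μ x n α| :=
          Finset.abs_sum_le_sum_abs _ _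
      _ ≤ ∑ _α ∈ S₀, M := Finset.sum_le_sum fun α _ =>
          iterP_bound μ hμ0 hμ1 x M hMx n α
      _ = (S₀.card : ℝ) * M := by rw [Finset.sum_const, nsmul_eq_mul]
  have hδbd : ∀ n : ℕ, (n : ℝ) * |δ| ≤ 2 * ((S₀.card : ℝ) * M) := by
    intro n
    have h1 := hbd 0
    have h2 := hbd n
    have h3 := hlin n
    calc (n : ℝ) * |δ| = |(n : ℝ) * δ| := by
          rw [abs_mul, abs_of_nonneg (by positivity : (0:ℝ) ≤ (n:ℝ))]
      _ = |(∑ α ∈ S₀, iterP μ x 0 α) - (∑ α ∈ S₀, iterP μ x n α)| := by rw [h3]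
      _ ≤ |∑ α ∈ S₀, iterP μ x 0 α| + |∑ α ∈ S₀, iterP μ x n α| := abs_sub _ _
      _ ≤ 2 * ((S₀.card : ℝ) * M) := by linarith
  have hδ0 : δ = 0 := by
    by_contra h
    have habs : 0 < |δ| := abs_pos.2 h
    obtain ⟨n, hn⟩ := exists_nat_gt (2 * ((S₀.card : ℝ) * M) / |δ|)
    have := hδbd n
    rw [div_lt_iff₀ habs] at hn
    linarith
  rw [hδ] at hδ0
  linarith
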